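/- Let A, B be symmetric n×n real matrices with A positive definite satisfying λ I ≤ A ≤ Λ I for constants 0 < λ ≤ Λ. Define E = AB - (1/n) tr(AB) I. Then (Λ/λ) tr(E²) ≥ tr(E Eᵀ) ≥ 0, i.e. (Λ/λ) · Σ_{i,j} E_{ij} E_{ji} ≥ Σ_{i,j} E_{ij}² ≥ 0. -/

import Mathlib

open Matrix

lemma aux_eig_bound {n : ℕ} (mu : ℝ) (A : Matrix (Fin n) (Fin n) ℝ)
    (hA : A.IsHermitian) (h : (A - mu • (1 : Matrix (Fin n) (Fin n) ℝ)).PosSemidef)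
    (i : Fin n) : mu ≤ hA.eigenvalues i := by
  set v : Fin n → ℝ := ⇑(hA.eigenvectorBasis i) with hv
  have hnrm : ‖hA.eigenvectorBasis i‖ = 1 := hA.eigenvectorBasis.orthonormal.1 i
  have hdot : dotProduct v v = 1 := by
    have h1 : (inner ℝ (hA.eigenvectorBasis i) (hA.eigenvectorBasis i) : ℝ) = 1 := by
      rw [real_inner_self_eq_norm_sq, hnrm]; norm_num
    rw [EuclideanSpace.inner_eq_star_dotProduct] at h1
    simpa using h1
  have he : hA.eigenvalues i = dotProduct v (A *ᵥ v) := by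
    have := hA.eigenvalues_eq i
    simpa using this
  have h2 := h.dotProduct_mulVec_nonneg v
  have h3 : (A - mu • (1 : Matrix (Fin n) (Fin n) ℝ)) *ᵥ v = A *ᵥ v - mu • v := by
    rw [sub_mulVec, smul_mulVec, one_mulVec]
  rw [h3] at h2
  simp only [star_trivial, dotProduct_sub, dotProduct_smul, hdot, smul_eq_mul, mul_one] at h2
  linarith [he ▸ h2]

lemma aux_eig_bound_up {n : ℕ} (mu : ℝ) (A : Matrix (Fin n) (Fin n) ℝ)
    (hA : A.IsHermitian) (h : (mu • (1 : Matrix (Fin n) (Fin n) ℝ) - A).PosSemidef)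
    (i : Fin n) : hA.eigenvalues i ≤ mu := by
  set v : Fin n → ℝ := ⇑(hA.eigenvectorBasis i) with hv
  have hnrm : ‖hA.eigenvectorBasis i‖ = 1 := hA.eigenvectorBasis.orthonormal.1 i
  have hdot : dotProduct v v = 1 := by
    have h1 : (inner ℝ (hA.eigenvectorBasis i) (hA.eigenvectorBasis i) : ℝ) = 1 := by
      rw [real_inner_self_eq_norm_sq, hnrm]; norm_num
    rw [EuclideanSpace.inner_eq_star_dotProduct] at h1
    simpa using h1
  have he : hA.eigenvalues i = dotProduct v (A *ᵥ v) := by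
    have := hA.eigenvalues_eq i
    simpa using this
  have h2 := h.dotProduct_mulVec_nonneg v
  have h3 : (mu • (1 : Matrix (Fin n) (Fin n) ℝ) - A) *ᵥ v = mu • v - A *ᵥ v := by
    rw [sub_mulVec, smul_mulVec, one_mulVec]
  rw [h3] at h2
  simp only [star_trivial, dotProduct_sub, dotProduct_smul, hdot, smul_eq_mul, mul_one] at h2
  linarith [he ▸ h2]

theorem stmt_2 {n : ℕ} (hn : 0 < n) (lam Lam : ℝ) (hlam : 0 < lam) (hle : lam ≤ Lam)
    (A B : Matrix (Fin n) (Fin n) ℝ) (hA : A.IsSymm) (hB : B.IsSymm)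
    (hA₁ : (A - lam • (1 : Matrix (Fin n) (Fin n) ℝ)).PosSemidef)
    (hA₂ : ((Lam • (1 : Matrix (Fin n) (Fin n) ℝ)) - A).PosSemidef)
    (E : Matrix (Fin n) (Fin n) ℝ)
    (hE : E = A * B - ((n : ℝ)⁻¹ * Matrix.trace (A * B)) • (1 : Matrix (Fin n) (Fin n) ℝ)) :
    (Lam / lam) * Matrix.trace (E * E) ≥ Matrix.trace (E * Eᵀ) ∧
      Matrix.trace (E * Eᵀ) ≥ 0 := by
  -- The easy part: trace (E * Eᵀ) = ∑ (E i j)^2 ≥ 0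
  have htrEEt : Matrix.trace (E * Eᵀ) = ∑ i, ∑ j, (E i j)^2 := by
    simp [Matrix.trace, Matrix.diag, Matrix.mul_apply, Matrix.transpose_apply, sq]
  have hnonneg : Matrix.trace (E * Eᵀ) ≥ 0 := by
    rw [htrEEt]
    exact Finset.sum_nonneg fun i _ => Finset.sum_nonneg fun j _ => sq_nonneg _
  refine ⟨?_, hnonneg⟩
  -- key algebraic relation: A * Eᵀ = E * A
  have hET : Eᵀ = B * A - ((n : ℝ)⁻¹ * Matrix.trace (A * B)) • (1 : Matrix (Fin n) (Fin n) ℝ) := by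
    rw [hE]
    rw [Matrix.transpose_sub, Matrix.transpose_smul, Matrix.transpose_one, Matrix.transpose_mul,
      hA.eq, hB.eq]
  have hrel : A * Eᵀ = E * A := by
    rw [hET, hE]
    noncomm_ring
  -- spectral decomposition of A
  have hAh : A.IsHermitian := by
    rw [Matrix.IsHermitian, Matrix.conjTranspose_eq_transpose_of_trivial]
    exact hA.eq
  set U : Matrix (Fin n) (Fin n) ℝ := (Matrix.IsHermitian.eigenvectorUnitary hAh : Matrix (Fin n) (Fin n) ℝ) with hU
  set a : Fin n → ℝ := hAh.eigenvalues with ha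
  have hUsU : U * star U = 1 := Matrix.mem_unitaryGroup_iff.mp (Matrix.IsHermitian.eigenvectorUnitary hAh).2
  have hsUU : star U * U = 1 := Matrix.mem_unitaryGroup_iff'.mp (Matrix.IsHermitian.eigenvectorUnitary hAh).2
  have hD : star U * A * U = Matrix.diagonal a := by
    have := Matrix.IsHermitian.conjStarAlgAut_star_eigenvectorUnitary (𝕜 := ℝ) hAh
    rw [Unitary.conjStarAlgAut_star_apply] at this
    simpa [RCLike.ofReal_real_eq_id] using this
  set M : Matrix (Fin n) (Fin n) ℝ := star U * E * U with hM
  have hsU : star U = Uᵀ := by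
    rw [Matrix.star_eq_conjTranspose, Matrix.conjTranspose_eq_transpose_of_trivial]
  have hMT : Mᵀ = star U * Eᵀ * U := by
    rw [hM, Matrix.transpose_mul, Matrix.transpose_mul, hsU]
    simp [Matrix.mul_assoc]
  -- conjugation identity for products
  have hconj : ∀ X Y : Matrix (Fin n) (Fin n) ℝ,
      (star U * X * U) * (star U * Y * U) = star U * (X * Y) * U := by
    intro X Y
    have h1 : ∀ Z : Matrix (Fin n) (Fin n) ℝ, U * (star U * Z) = Z := fun Z => by
      rw [← Matrix.mul_assoc, hUsU, Matrix.one_mul]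
    simp only [Matrix.mul_assoc, h1]
  have htrconj : ∀ X : Matrix (Fin n) (Fin n) ℝ,
      Matrix.trace (star U * X * U) = Matrix.trace X := by
    intro X
    rw [Matrix.trace_mul_cycle, hUsU, Matrix.one_mul]
  -- trace identities
  have htr1 : Matrix.trace (E * E) = Matrix.trace (M * M) := by
    rw [hM, hconj, htrconj]
  have htr2 : Matrix.trace (E * Eᵀ) = Matrix.trace (M * Mᵀ) := by
    rw [hMT, hM, hconj, htrconj]
  -- the entrywise relation
  have hMrel : Matrix.diagonal a * Mᵀ = M * Matrix.diagonal a := by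
    rw [hMT, hM, ← hD, hconj, hconj, hrel]
  have hentry : ∀ i j, a i * M j i = M i j * a j := by
    intro i j
    have h := congrFun (congrFun hMrel i) j
    simpa [Matrix.diagonal_mul, Matrix.mul_diagonal, Matrix.transpose_apply] using h
  -- eigenvalue bounds
  have hlow : ∀ i, lam ≤ a i := fun i => aux_eig_bound lam A hAh hA₁ i
  have hhigh : ∀ i, a i ≤ Lam := fun i => aux_eig_bound_up Lam A hAh hA₂ i
  -- pointwise inequality
  have hpt : ∀ i j, lam * (M i j)^2 ≤ Lam * (M i j * M j i) := by
    intro i j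
    have e1 : M i j * M j i * a i = M i j ^ 2 * a j := by linear_combination M i j * hentry i j
    have h1 : 0 < a i := lt_of_lt_of_le hlam (hlow i)
    have h2 : lam ≤ a j := hlow j
    have h3 : a i ≤ Lam := hhigh i
    have hp : 0 ≤ M i j * M j i := by nlinarith [sq_nonneg (M i j)]
    nlinarith [sq_nonneg (M i j)]
  have hMM : Matrix.trace (M * M) = ∑ i, ∑ j, M i j * M j i := by
    simp [Matrix.trace, Matrix.diag, Matrix.mul_apply]
  have hMMt : Matrix.trace (M * Mᵀ) = ∑ i, ∑ j, (M i j)^2 := by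
    simp [Matrix.trace, Matrix.diag, Matrix.mul_apply, Matrix.transpose_apply, sq]
  have hsum : lam * Matrix.trace (M * Mᵀ) ≤ Lam * Matrix.trace (M * M) := by
    rw [hMM, hMMt, Finset.mul_sum, Finset.mul_sum]
    refine Finset.sum_le_sum fun i _ => ?_
    rw [Finset.mul_sum, Finset.mul_sum]
    exact Finset.sum_le_sum fun j _ => hpt i j
  rw [ge_iff_le, htr1, htr2, div_mul_eq_mul_div, le_div_iff₀ hlam]
  linarith [hsum]
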